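/- Trivialization when system and catalyst free states share the smallest eigenvalue: if F_S = {γ_S} and F_C = {γ_C} are singletons of full-rank states whose smallest eigenvalues are both λ₁, then for every pair of states ρ_S, σ_S there is an RNG channel Λ: S⊗C → S⊗C (with respect to the maximal composition) and a catalyst state ψ_C such that Λ(ρ_S ⊗ ψ_C) = σ_S ⊗ ψ_C. -/

import Mathlib

open Matrix Kronecker ComplexOrder

noncomputable section

namespace QIT

/-- Partial trace over the first tensor factor. -/
def trFst {A B : Type*} [Fintype A] (M : Matrix (A × B) (A × B) ℂ) : Matrix B B ℂ :=
  Matrix.of fun b b' => ∑ a, M (a, b) (a, b')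

/-- Partial trace over the second tensor factor. -/
def trSnd {A B : Type*} [Fintype B] (M : Matrix (A × B) (A × B) ℂ) : Matrix A A ℂ :=
  Matrix.of fun a a' => ∑ b, M (a, b) (a', b)

/-- A density matrix: positive semidefinite with unit trace. -/
def IsDensity {A : Type*} [Fintype A] (M : Matrix A A ℂ) : Prop :=
  M.PosSemidef ∧ M.trace = 1

/-- The trace norm ‖M‖₁ = Tr √(MᴴM). -/
def traceNorm {A : Type*} [Fintype A] [DecidableEq A] (M : Matrix A A ℂ) : ℝ :=
  ((Matrix.IsHermitian.eigenvectorUnitary (Matrix.posSemidef_conjTranspose_mul_self M).1 :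
      Matrix A A ℂ) *
    Matrix.diagonal (fun i =>
      ((Real.sqrt ((Matrix.posSemidef_conjTranspose_mul_self M).1.eigenvalues i) : ℝ) : ℂ)) *
    (star (Matrix.IsHermitian.eigenvectorUnitary (Matrix.posSemidef_conjTranspose_mul_self M).1) :
      Matrix A A ℂ)).trace.re

/-- The extension `id_{Fin k} ⊗ B` of a map on matrices. -/
def extFun {C D : Type*} (B : Matrix C C ℂ → Matrix D D ℂ) (k : ℕ)
    (M : Matrix (Fin k × C) (Fin k × C) ℂ) : Matrix (Fin k × D) (Fin k × D) ℂ :=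
  Matrix.of fun p q => B (Matrix.of fun c c' => M (p.1, c) (q.1, c')) p.2 q.2

/-- Complete positivity: every extension by an identity preserves positive semidefiniteness. -/
def IsCP {C D : Type*} [Fintype C] [Fintype D] (B : Matrix C C ℂ → Matrix D D ℂ) : Prop :=
  ∀ (k : ℕ) (M : Matrix (Fin k × C) (Fin k × C) ℂ), M.PosSemidef → (extFun B k M).PosSemidef

/-- Trace preservation. -/
def IsTP {C D : Type*} [Fintype C] [Fintype D] (B : Matrix C C ℂ → Matrix D D ℂ) : Prop :=
  ∀ M, (B M).trace = M.trace

/-- A quantum channel: linear, trace-preserving, completely positive. -/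
def IsChannel {C D : Type*} [Fintype C] [Fintype D] (B : Matrix C C ℂ → Matrix D D ℂ) : Prop :=
  IsLinearMap ℂ B ∧ IsTP B ∧ IsCP B

/-- Minimal composition of two free-state sets. -/
def minComp {A B : Type*} (FA : Set (Matrix A A ℂ)) (FB : Set (Matrix B B ℂ)) :
    Set (Matrix (A × B) (A × B) ℂ) :=
  convexHull ℝ {M | ∃ a ∈ FA, ∃ b ∈ FB, M = a ⊗ₖ b}

/-- Maximal composition of two free-state sets: both marginals are free. -/
def maxComp {A B : Type*} [Fintype A] [Fintype B]
    (FA : Set (Matrix A A ℂ)) (FB : Set (Matrix B B ℂ)) :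
    Set (Matrix (A × B) (A × B) ℂ) :=
  {M | trSnd M ∈ FA ∧ trFst M ∈ FB}

/-- Separability: convex combination of products of density matrices. -/
def Separable {A B : Type*} [Fintype A] [Fintype B] (M : Matrix (A × B) (A × B) ℂ) : Prop :=
  M ∈ convexHull ℝ {X | ∃ ξ ζ, IsDensity ξ ∧ IsDensity ζ ∧ X = ξ ⊗ₖ ζ}

/-- Matrix logarithm of a Hermitian matrix via the spectral decomposition. -/
def mlog {A : Type*} [Fintype A] [DecidableEq A] (M : Matrix A A ℂ) : Matrix A A ℂ :=
  if h : M.IsHermitian then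
    (Matrix.IsHermitian.eigenvectorUnitary h : Matrix A A ℂ) *
      Matrix.diagonal (fun i => (Real.log (h.eigenvalues i) : ℂ)) *
      (star (Matrix.IsHermitian.eigenvectorUnitary h) : Matrix A A ℂ)
  else 0

/-- Umegaki relative entropy D(ρ‖σ) = Tr[ρ(log ρ − log σ)]. -/
def relEnt {A : Type*} [Fintype A] [DecidableEq A] (ρ σ : Matrix A A ℂ) : ℝ :=
  ((ρ * (mlog ρ - mlog σ)).trace).re

/-- Reversed relative entropy of resource R̃(ρ) = inf_{γ free} D(γ‖ρ). -/
def revRelEntRes {A : Type*} [Fintype A] [DecidableEq A]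
    (F : Set (Matrix A A ℂ)) (ρ : Matrix A A ℂ) : ℝ :=
  sInf {x | ∃ γ ∈ F, x = relEnt γ ρ}

/-- Max-relative entropy of resource. -/
def Dmax {A : Type*} [Fintype A] (ρ : Matrix A A ℂ) (F : Set (Matrix A A ℂ)) : ℝ :=
  sInf {x | ∃ r : ℝ, ∃ ω ∈ F, x = Real.log r ∧ (r • ω - ρ).PosSemidef}


/-- The extension `Λ ⊗ id_R` of a map on matrices, acting on the first factor. -/
def extFunR {A A' R : Type*} (Λ : Matrix A A ℂ → Matrix A' A' ℂ)
    (M : Matrix (A × R) (A × R) ℂ) : Matrix (A' × R) (A' × R) ℂ :=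
  Matrix.of fun p q => Λ (Matrix.of fun a a' => M (a, p.2) (a', q.2)) p.1 q.1


/-! ### Auxiliary lemmas -/

lemma kron_conjT {m n : Type*} (A : Matrix m m ℂ) (B : Matrix n n ℂ) :
    (A ⊗ₖ B)ᴴ = Aᴴ ⊗ₖ Bᴴ := by
  ext ⟨i, j⟩ ⟨k, l⟩
  simp [conjTranspose_apply, kroneckerMap_apply, mul_comm]

lemma psd_kron {m n : Type*} [Fintype m] [DecidableEq m] [Fintype n] [DecidableEq n]
    {A : Matrix m m ℂ} {B : Matrix n n ℂ} (hA : A.PosSemidef) (hB : B.PosSemidef) :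
    (A ⊗ₖ B).PosSemidef := by
  exact hA.kronecker hB

lemma psd_rsmul {m : Type*} [Fintype m] {A : Matrix m m ℂ} (hA : A.PosSemidef)
    (c : ℝ) (hc : 0 ≤ c) : ((c : ℂ) • A).PosSemidef := by
  refine ⟨?_, fun x => ?_⟩
  · unfold Matrix.IsHermitian
    rw [conjTranspose_smul, hA.1]
    congr 1
    simp
  · exact (hA.smul (show (0:ℂ) ≤ (c:ℂ) by exact_mod_cast hc)).2 x

lemma psd_conj_diag {m : Type*} [Fintype m] [DecidableEq m]
    (U : Matrix.unitaryGroup m ℂ) (d : m → ℝ) (hd : ∀ i, 0 ≤ d i) :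
    ((U : Matrix m m ℂ) * Matrix.diagonal (fun i => (d i : ℂ)) *
      star (U : Matrix m m ℂ)).PosSemidef := by
  rw [Matrix.star_eq_conjTranspose]
  exact (Matrix.PosSemidef.diagonal
    (fun i => Complex.zero_le_real.mpr (hd i))).mul_mul_conjTranspose_same _

lemma trace_eq_sum_eig {m : Type*} [Fintype m] [DecidableEq m]
    {A : Matrix m m ℂ} (hA : A.IsHermitian) :
    A.trace = ((∑ i, hA.eigenvalues i : ℝ) : ℂ) := by
  conv_lhs => rw [hA.spectral_theorem, Unitary.conjStarAlgAut_apply]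
  rw [Matrix.trace_mul_cycle]
  rw [show star (hA.eigenvectorUnitary : Matrix m m ℂ) * (hA.eigenvectorUnitary : Matrix m m ℂ) = 1
    from (Matrix.mem_unitaryGroup_iff').mp hA.eigenvectorUnitary.2]
  rw [one_mul, Matrix.trace_diagonal]
  push_cast
  rfl

lemma sub_smul_one_psd {m : Type*} [Fintype m] [DecidableEq m]
    {γ : Matrix m m ℂ} (hγ : γ.IsHermitian) (lam : ℝ)
    (hmin : ∀ (μ : ℝ) (w : m → ℂ), w ≠ 0 → γ *ᵥ w = (μ : ℂ) • w → lam ≤ μ) :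
    (γ - (lam : ℂ) • 1).PosSemidef := by
  have hkey : (hγ.eigenvectorUnitary : Matrix m m ℂ) *
      Matrix.diagonal (fun i => ((hγ.eigenvalues i - lam : ℝ) : ℂ)) *
      star (hγ.eigenvectorUnitary : Matrix m m ℂ) = γ - (lam : ℂ) • 1 := by
    have hd : Matrix.diagonal (fun i => ((hγ.eigenvalues i - lam : ℝ) : ℂ)) =
        Matrix.diagonal (RCLike.ofReal ∘ hγ.eigenvalues) - (lam : ℂ) • 1 := by
      rw [← Matrix.diagonal_one, ← Matrix.diagonal_smul, Matrix.diagonal_sub]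
      congr 1
      funext i
      push_cast
      simp [Function.comp]
    rw [hd, Matrix.mul_sub, Matrix.sub_mul]
    conv_rhs => rw [hγ.spectral_theorem, Unitary.conjStarAlgAut_apply]
    congr 1
    rw [Matrix.mul_smul, Matrix.smul_mul, mul_one]
    rw [show (hγ.eigenvectorUnitary : Matrix m m ℂ) * star (hγ.eigenvectorUnitary : Matrix m m ℂ)
      = 1 from (Matrix.mem_unitaryGroup_iff).mp hγ.eigenvectorUnitary.2]
  rw [← hkey]
  apply psd_conj_diag hγ.eigenvectorUnitary
  intro i
  have h1 : lam ≤ hγ.eigenvalues i := by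
    apply hmin _ (⇑(hγ.eigenvectorBasis i))
    · intro h
      exact hγ.eigenvectorBasis.orthonormal.ne_zero i (by ext j; exact congrFun h j)
    · have := hγ.mulVec_eigenvectorBasis i
      rw [this]
      funext j
      simp [Complex.real_smul]
  linarith

lemma one_sub_density_psd {m : Type*} [Fintype m] [DecidableEq m]
    {σ : Matrix m m ℂ} (hσ : σ.PosSemidef) (htr : σ.trace = 1) :
    ((1 : Matrix m m ℂ) - σ).PosSemidef := by
  have hH := hσ.1
  have hkey : (hH.eigenvectorUnitary : Matrix m m ℂ) *
      Matrix.diagonal (fun i => ((1 - hH.eigenvalues i : ℝ) : ℂ)) *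
      star (hH.eigenvectorUnitary : Matrix m m ℂ) = (1 : Matrix m m ℂ) - σ := by
    have hd : Matrix.diagonal (fun i => ((1 - hH.eigenvalues i : ℝ) : ℂ)) =
        (1 : Matrix m m ℂ) - Matrix.diagonal (RCLike.ofReal ∘ hH.eigenvalues) := by
      rw [← Matrix.diagonal_one, Matrix.diagonal_sub]
      congr 1
      funext i
      push_cast
      simp [Function.comp]
    rw [hd, Matrix.mul_sub, Matrix.sub_mul]
    conv_rhs => rw [hH.spectral_theorem, Unitary.conjStarAlgAut_apply]
    congr 1
    rw [mul_one]
    rw [show (hH.eigenvectorUnitary : Matrix m m ℂ) * star (hH.eigenvectorUnitary : Matrix m m ℂ)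
      = 1 from (Matrix.mem_unitaryGroup_iff).mp hH.eigenvectorUnitary.2]
  rw [← hkey]
  apply psd_conj_diag hH.eigenvectorUnitary
  intro i
  have hsum : ∑ j, hH.eigenvalues j = 1 := by
    have := trace_eq_sum_eig hH
    rw [htr] at this
    exact_mod_cast this.symm
  have hle : hH.eigenvalues i ≤ ∑ j, hH.eigenvalues j :=
    Finset.single_le_sum (fun j _ => hσ.eigenvalues_nonneg j) (Finset.mem_univ i)
  linarith

lemma trace_one_kron_mul {S C : Type*} [Fintype S] [DecidableEq S] [Fintype C]
    (E : Matrix C C ℂ) (M : Matrix (S × C) (S × C) ℂ) :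
    (((1 : Matrix S S ℂ) ⊗ₖ E) * M).trace = (E * trFst M).trace := by
  simp only [Matrix.trace, Matrix.diag, Matrix.mul_apply, trFst, Matrix.of_apply,
    kroneckerMap_apply, Matrix.one_apply, Fintype.sum_prod_type, ite_mul, one_mul, zero_mul,
    Finset.mul_sum]
  rw [Finset.sum_comm]
  congr 1; funext c
  have key : ∀ x : S, (∑ x1 : S, ∑ x2 : C, if x = x1 then E c x2 * M (x1, x2) (x, c) else 0)
      = ∑ x2 : C, E c x2 * M (x, x2) (x, c) := by
    intro x
    rw [Finset.sum_comm]
    simp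
  simp only [key]
  rw [Finset.sum_comm]

lemma trFst_kron {S C : Type*} [Fintype S] (a : Matrix S S ℂ) (b : Matrix C C ℂ) :
    trFst (a ⊗ₖ b) = a.trace • b := by
  ext c c'
  simp [trFst, Matrix.trace, Matrix.diag, Finset.sum_mul]

lemma trSnd_kron {S C : Type*} [Fintype C] (a : Matrix S S ℂ) (b : Matrix C C ℂ) :
    trSnd (a ⊗ₖ b) = b.trace • a := by
  ext s s'
  simp [trSnd, Matrix.trace, Matrix.diag, Finset.mul_sum, mul_comm]

lemma trFst_add {S C : Type*} [Fintype S] (A B : Matrix (S × C) (S × C) ℂ) :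
    trFst (A + B) = trFst A + trFst B := by
  ext c c'
  simp [trFst, Finset.sum_add_distrib]

lemma trFst_smul {S C : Type*} [Fintype S] (c : ℂ) (A : Matrix (S × C) (S × C) ℂ) :
    trFst (c • A) = c • trFst A := by
  ext b b'
  simp [trFst, Finset.mul_sum]

lemma trSnd_add {S C : Type*} [Fintype C] (A B : Matrix (S × C) (S × C) ℂ) :
    trSnd (A + B) = trSnd A + trSnd B := by
  ext s s'
  simp [trSnd, Finset.sum_add_distrib]

lemma trSnd_smul {S C : Type*} [Fintype C] (c : ℂ) (A : Matrix (S × C) (S × C) ℂ) :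
    trSnd (c • A) = c • trSnd A := by
  ext s s'
  simp [trSnd, Finset.mul_sum]

lemma trSnd_psd {I A : Type*} [Fintype I] [Fintype A] [DecidableEq A]
    {Q : Matrix (I × A) (I × A) ℂ} (hQ : Q.PosSemidef) : (trSnd Q).PosSemidef := by
  have h := hQ.1
  refine Matrix.PosSemidef.of_dotProduct_mulVec_nonneg ?_ ?_
  · show (trSnd Q)ᴴ = trSnd Q
    ext i j
    simp only [Matrix.conjTranspose_apply, trSnd, Matrix.of_apply, star_sum]
    refine Finset.sum_congr rfl fun b _ => ?_
    conv_rhs => rw [← h]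
    simp [Matrix.conjTranspose_apply]
  · intro x
    have key : star x ⬝ᵥ trSnd Q *ᵥ x =
        ∑ b, star (fun p : I × A => if p.2 = b then x p.1 else 0) ⬝ᵥ
          Q *ᵥ (fun p : I × A => if p.2 = b then x p.1 else 0) := by
      simp only [dotProduct, Matrix.mulVec, Pi.star_apply, trSnd, Matrix.of_apply,
        Fintype.sum_prod_type, apply_ite star, star_zero, ite_mul, zero_mul, mul_ite, mul_zero,
        Finset.sum_ite_eq', Finset.mem_univ, if_true, Finset.mul_sum, Finset.sum_mul]
      have collapse : ∀ (x1 : A) (x2 : I),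
          (∑ x3 : A, ∑ x4 : I, if x3 = x1 then star (x x2) * (Q (x2, x3) (x4, x1) * x x4) else 0)
          = ∑ x4 : I, star (x x2) * (Q (x2, x1) (x4, x1) * x x4) := by
        intro x1 x2
        rw [Finset.sum_comm]
        simp
      simp only [collapse]
      conv_lhs => rw [Finset.sum_comm]
      conv_lhs => enter [2, x1]; rw [Finset.sum_comm]
      conv_lhs => rw [Finset.sum_comm]
      conv_lhs => enter [2, y]; rw [Finset.sum_comm]
    rw [key]
    exact Finset.sum_nonneg fun b _ => hQ.dotProduct_mulVec_nonneg _

open scoped MatrixOrder in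
lemma blockTrace_psd {I A : Type*} [Fintype I] [DecidableEq I] [Fintype A] [DecidableEq A]
    {E : Matrix A A ℂ} (hE : E.PosSemidef) {M : Matrix (I × A) (I × A) ℂ}
    (hM : M.PosSemidef) :
    (Matrix.of fun i j : I => ∑ a, ∑ b, E a b * M (i, b) (j, a)).PosSemidef := by
  set B := CFC.sqrt E with hBdef
  have hBH : B.IsHermitian := (CFC.sqrt_nonneg E).posSemidef.1
  have hBB : B * B = E := CFC.sqrt_mul_sqrt_self E hE.nonneg
  have hkH : ((1 : Matrix I I ℂ) ⊗ₖ B)ᴴ = (1 : Matrix I I ℂ) ⊗ₖ B := by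
    rw [kron_conjT, Matrix.conjTranspose_one, hBH]
  have hQ : (((1 : Matrix I I ℂ) ⊗ₖ B) * M * ((1 : Matrix I I ℂ) ⊗ₖ B)).PosSemidef := by
    have := hM.conjTranspose_mul_mul_same ((1 : Matrix I I ℂ) ⊗ₖ B)
    rwa [hkH] at this
  have hkey : (Matrix.of fun i j : I => ∑ a, ∑ b, E a b * M (i, b) (j, a)) =
      trSnd (((1 : Matrix I I ℂ) ⊗ₖ B) * M * ((1 : Matrix I I ℂ) ⊗ₖ B)) := by
    ext i j
    simp only [trSnd, Matrix.of_apply, Matrix.mul_apply, kroneckerMap_apply, Matrix.one_apply,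
      Fintype.sum_prod_type, ite_mul, one_mul, zero_mul, mul_ite, mul_zero, mul_one,
      Finset.sum_ite_eq, Finset.sum_ite_eq', Finset.mem_univ, if_true,
      Finset.mul_sum, Finset.sum_mul]
    have c1 : ∀ (z a : A) (x1 : I),
        (∑ x3 : I, ∑ x4 : A, if i = x3 then B z x4 * M (x3, x4) (x1, a) * B a z else 0)
        = ∑ x4 : A, B z x4 * M (i, x4) (x1, a) * B a z := by
      intro z a x1
      simp [Finset.sum_ite_eq]
    simp only [c1]
    have c2 : ∀ z : A,
        (∑ x1 : I, ∑ a : A, if x1 = j then (∑ x4 : A, B z x4 * M (i, x4) (x1, a) * B a z) else 0)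
        = ∑ a : A, ∑ x4 : A, B z x4 * M (i, x4) (j, a) * B a z := by
      intro z
      rw [Finset.sum_comm]
      simp
    simp only [c2]
    simp only [← hBB, Matrix.mul_apply, Finset.sum_mul]
    conv_lhs => enter [2, a]; rw [Finset.sum_comm]
    conv_lhs => rw [Finset.sum_comm]
    refine Finset.sum_congr rfl fun z _ => Finset.sum_congr rfl fun a _ =>
      Finset.sum_congr rfl fun b _ => ?_
    ring
  rw [hkey]
  exact trSnd_psd hQ

/-- trivialization when the singleton free states of system and catalyst
share the same smallest eigenvalue `λ₁`: every state transformation `ρ_S → σ_S` is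
achieved by an RNG channel (w.r.t. the maximal composition) together with a catalyst. -/
theorem shared_smallest_eigenvalue_trivialization
    {S C : Type*} [Fintype S] [DecidableEq S] [Fintype C] [DecidableEq C]
    (γS : Matrix S S ℂ) (hγSdens : IsDensity γS) (hγSpd : γS.PosDef)
    (γC : Matrix C C ℂ) (hγCdens : IsDensity γC) (hγCpd : γC.PosDef)
    (lam : ℝ) (hlam0 : 0 < lam) (hlam1 : lam < 1)
    (hEigS : ∃ v : S → ℂ, v ≠ 0 ∧ γS *ᵥ v = (lam : ℂ) • v)
    (hminS : ∀ (μ : ℝ) (w : S → ℂ), w ≠ 0 → γS *ᵥ w = (μ : ℂ) • w → lam ≤ μ)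
    (hEigC : ∃ v : C → ℂ, v ≠ 0 ∧ γC *ᵥ v = (lam : ℂ) • v)
    (hminC : ∀ (μ : ℝ) (w : C → ℂ), w ≠ 0 → γC *ᵥ w = (μ : ℂ) • w → lam ≤ μ) :
    ∀ (ρS σS : Matrix S S ℂ), IsDensity ρS → IsDensity σS →
      ∃ (Λ : Matrix (S × C) (S × C) ℂ → Matrix (S × C) (S × C) ℂ)
        (ψ : Matrix C C ℂ),
        IsChannel Λ ∧ IsDensity ψ ∧
        (∀ M : Matrix (S × C) (S × C) ℂ, IsDensity M →
          trSnd M = γS → trFst M = γC → trSnd (Λ M) = γS ∧ trFst (Λ M) = γC) ∧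
        Λ (ρS ⊗ₖ ψ) = σS ⊗ₖ ψ := by
  intro ρS σS hρ hσ
  obtain ⟨v, hv, hvE⟩ := hEigC
  set r : ℝ := ∑ i, Complex.normSq (v i) with hr
  have hrpos : 0 < r := by
    obtain ⟨i, hi⟩ := Function.ne_iff.mp hv
    exact Finset.sum_pos' (fun j _ => Complex.normSq_nonneg _)
      ⟨i, Finset.mem_univ i, Complex.normSq_pos.mpr hi⟩
  have hnr : star v ⬝ᵥ v = (r : ℂ) := by
    simp only [hr, dotProduct, Pi.star_apply]
    push_cast
    exact Finset.sum_congr rfl fun i _ => (Complex.normSq_eq_conj_mul_self).symm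
  have hn0 : (r : ℂ) ≠ 0 := by exact_mod_cast hrpos.ne'
  set ψ : Matrix C C ℂ := ((r : ℂ))⁻¹ • Matrix.vecMulVec v (star v) with hψdef
  have hψapp : ∀ i j, ψ i j = (r : ℂ)⁻¹ * (v i * star (v j)) := by
    intro i j
    simp [hψdef, Matrix.vecMulVec_apply]
  have hψH : ψ.IsHermitian := by
    show ψᴴ = ψ
    ext i j
    rw [Matrix.conjTranspose_apply, hψapp, hψapp]
    simp only [star_mul', star_star, Complex.star_def, map_inv₀, Complex.conj_ofReal, Complex.conj_conj]
    ring
  have hψtr : ψ.trace = 1 := by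
    simp only [Matrix.trace, Matrix.diag, hψapp]
    rw [← Finset.mul_sum]
    have : ∑ i, v i * star (v i) = (r : ℂ) := by
      rw [← hnr]
      simp [dotProduct, mul_comm]
    rw [this]
    exact inv_mul_cancel₀ hn0
  have hψψ : ψ * ψ = ψ := by
    ext i j
    rw [Matrix.mul_apply, hψapp]
    have : ∀ k, ψ i k * ψ k j
        = ((r : ℂ)⁻¹ * (r : ℂ)⁻¹ * (v i * star (v j))) * (star (v k) * v k) := by
      intro k
      rw [hψapp, hψapp]
      ring
    simp only [this]
    rw [← Finset.mul_sum]
    have h2 : ∑ k, star (v k) * v k = (r : ℂ) := by rw [← hnr]; rfl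
    rw [h2]
    field_simp
  have hγψ : γC * ψ = (lam : ℂ) • ψ := by
    have hv' : ∀ i, ∑ k, γC i k * v k = (lam : ℂ) * v i := by
      intro i
      have := congrFun hvE i
      simpa [Matrix.mulVec, dotProduct] using this
    ext i j
    rw [Matrix.mul_apply, Matrix.smul_apply, hψapp, smul_eq_mul]
    have : ∀ k, γC i k * ψ k j = ((r : ℂ)⁻¹ * star (v j)) * (γC i k * v k) := by
      intro k
      rw [hψapp]
      ring
    simp only [this]
    rw [← Finset.mul_sum, hv']
    ring
  have hψpsd : ψ.PosSemidef := by
    have hvm : Matrix.vecMulVec v (star v) = (Matrix.replicateRow Unit (star v))ᴴ *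
        Matrix.replicateRow Unit (star v) := by
      rw [Matrix.conjTranspose_replicateRow, star_star, ← Matrix.vecMulVec_eq (ι := Unit)]
    have h1 : (Matrix.vecMulVec v (star v)).PosSemidef := by
      rw [hvm]
      exact Matrix.posSemidef_conjTranspose_mul_self _
    have := psd_rsmul h1 r⁻¹ (inv_nonneg.mpr hrpos.le)
    rwa [Complex.ofReal_inv] at this
  have hψdens : IsDensity ψ := ⟨hψpsd, hψtr⟩
  -- 1 - ψ is PSD
  have h1ψH : ((1 : Matrix C C ℂ) - ψ)ᴴ = 1 - ψ := by
    rw [Matrix.conjTranspose_sub, Matrix.conjTranspose_one, hψH.eq]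
  have h1ψmul : ((1 : Matrix C C ℂ) - ψ) * (1 - ψ) = 1 - ψ := by
    simp only [Matrix.sub_mul, Matrix.mul_sub, hψψ, one_mul, mul_one]
    abel
  have h1ψpsd : ((1 : Matrix C C ℂ) - ψ).PosSemidef := by
    have := Matrix.posSemidef_conjTranspose_mul_self ((1 : Matrix C C ℂ) - ψ)
    rwa [h1ψH, h1ψmul] at this
  -- the residual states ω and ζ
  have hl1 : (0:ℝ) < 1 - lam := by linarith
  have hl1c : ((1:ℂ) - (lam:ℂ)) ≠ 0 := by
    rw [show (1:ℂ) - (lam:ℂ) = ((1 - lam : ℝ) : ℂ) by push_cast; ring]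
    exact_mod_cast hl1.ne' 
  set ω : Matrix S S ℂ := (((1 - lam)⁻¹ : ℝ) : ℂ) • (γS - (lam : ℂ) • σS) with hωdef
  set ζ : Matrix C C ℂ := (((1 - lam)⁻¹ : ℝ) : ℂ) • (γC - (lam : ℂ) • ψ) with hζdef
  have hdecS : γS - (lam : ℂ) • σS
      = (γS - (lam : ℂ) • 1) + (lam : ℂ) • ((1 : Matrix S S ℂ) - σS) := by
    rw [smul_sub]
    abel
  have hdecC : γC - (lam : ℂ) • ψ
      = (γC - (lam : ℂ) • 1) + (lam : ℂ) • ((1 : Matrix C C ℂ) - ψ) := by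
    rw [smul_sub]
    abel
  have hωpsd : ω.PosSemidef := by
    apply psd_rsmul _ _ (inv_nonneg.mpr hl1.le)
    rw [hdecS]
    exact (sub_smul_one_psd hγSpd.1 lam hminS).add
      (psd_rsmul (one_sub_density_psd hσ.1 hσ.2) lam hlam0.le)
  have hζpsd : ζ.PosSemidef := by
    apply psd_rsmul _ _ (inv_nonneg.mpr hl1.le)
    rw [hdecC]
    exact (sub_smul_one_psd hγCpd.1 lam hminC).add (psd_rsmul h1ψpsd lam hlam0.le)
  have hcoef : (((1 - lam)⁻¹ : ℝ) : ℂ) * ((1:ℂ) - (lam:ℂ)) = 1 := by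
    push_cast
    field_simp
  have hωtr : ω.trace = 1 := by
    rw [hωdef, Matrix.trace_smul, Matrix.trace_sub, Matrix.trace_smul, hγSdens.2, hσ.2]
    rw [smul_eq_mul, smul_eq_mul, mul_one]
    rw [hcoef]
  have hζtr : ζ.trace = 1 := by
    rw [hζdef, Matrix.trace_smul, Matrix.trace_sub, Matrix.trace_smul, hγCdens.2, hψtr]
    rw [smul_eq_mul, smul_eq_mul, mul_one]
    rw [hcoef]
  -- the output states and effects
  set τ₁ : Matrix (S × C) (S × C) ℂ := σS ⊗ₖ ψ with hτ₁def
  set τ₂ : Matrix (S × C) (S × C) ℂ := ω ⊗ₖ ζ with hτ₂def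
  have hτ₁psd : τ₁.PosSemidef := psd_kron hσ.1 hψpsd
  have hτ₂psd : τ₂.PosSemidef := psd_kron hωpsd hζpsd
  have hτ₁tr : τ₁.trace = 1 := by rw [hτ₁def, Matrix.trace_kronecker, hσ.2, hψtr, mul_one]
  have hτ₂tr : τ₂.trace = 1 := by rw [hτ₂def, Matrix.trace_kronecker, hωtr, hζtr, mul_one]
  set E₁ : Matrix (S × C) (S × C) ℂ := (1 : Matrix S S ℂ) ⊗ₖ ψ with hE₁def
  set E₂ : Matrix (S × C) (S × C) ℂ := (1 : Matrix S S ℂ) ⊗ₖ ((1 : Matrix C C ℂ) - ψ)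
    with hE₂def
  have hE₁psd : E₁.PosSemidef := psd_kron Matrix.PosSemidef.one hψpsd
  have hE₂psd : E₂.PosSemidef := psd_kron Matrix.PosSemidef.one h1ψpsd
  have hE₁E₂ : E₁ + E₂ = 1 := by
    rw [hE₁def, hE₂def, ← Matrix.kronecker_add,
      show ψ + ((1 : Matrix C C ℂ) - ψ) = 1 from by abel, Matrix.one_kronecker_one]
  refine ⟨fun X => ((E₁ * X).trace) • τ₁ + ((E₂ * X).trace) • τ₂, ψ, ⟨?_, ?_, ?_⟩,
    hψdens, ?_, ?_⟩
  · -- linearity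
    constructor
    · intro X Y
      rw [Matrix.mul_add, Matrix.mul_add, Matrix.trace_add, Matrix.trace_add,
        add_smul, add_smul]
      abel
    · intro c X
      rw [Matrix.mul_smul, Matrix.mul_smul, Matrix.trace_smul, Matrix.trace_smul,
        smul_assoc, smul_assoc, smul_add]
  · -- trace preservation
    intro M
    rw [Matrix.trace_add, Matrix.trace_smul, Matrix.trace_smul, hτ₁tr, hτ₂tr,
      smul_eq_mul, smul_eq_mul, mul_one, mul_one, ← Matrix.trace_add, ← Matrix.add_mul,
      hE₁E₂, one_mul]
  · -- complete positivity
    intro k M hM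
    have hent : extFun (fun X => ((E₁ * X).trace) • τ₁ + ((E₂ * X).trace) • τ₂) k M =
        (Matrix.of fun i j : Fin k => ∑ a, ∑ b, E₁ a b * M (i, b) (j, a)) ⊗ₖ τ₁ +
        (Matrix.of fun i j : Fin k => ∑ a, ∑ b, E₂ a b * M (i, b) (j, a)) ⊗ₖ τ₂ := by
      ext ⟨i, s⟩ ⟨j, s'⟩
      simp only [extFun, Matrix.of_apply, Matrix.add_apply, Matrix.smul_apply, smul_eq_mul,
        kroneckerMap_apply, Matrix.trace, Matrix.diag, Matrix.mul_apply]
    rw [hent]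
    exact (psd_kron (blockTrace_psd hE₁psd hM) hτ₁psd).add
      (psd_kron (blockTrace_psd hE₂psd hM) hτ₂psd)
  · -- RNG
    intro M hM h1 h2
    have e1 : (E₁ * M).trace = (lam : ℂ) := by
      rw [hE₁def, trace_one_kron_mul, h2, Matrix.trace_mul_comm, hγψ, Matrix.trace_smul,
        hψtr, smul_eq_mul, mul_one]
    have e2 : (E₂ * M).trace = 1 - (lam : ℂ) := by
      rw [hE₂def, trace_one_kron_mul, h2, Matrix.sub_mul, one_mul, Matrix.trace_sub,
        hγCdens.2, Matrix.trace_mul_comm, hγψ, Matrix.trace_smul, hψtr, smul_eq_mul, mul_one]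
    have hrec1 : ((1:ℂ) - (lam:ℂ)) • ω = γS - (lam : ℂ) • σS := by
      rw [hωdef, smul_smul, mul_comm, hcoef, one_smul]
    have hrec2 : ((1:ℂ) - (lam:ℂ)) • ζ = γC - (lam : ℂ) • ψ := by
      rw [hζdef, smul_smul, mul_comm, hcoef, one_smul]
    constructor
    · show trSnd ((E₁ * M).trace • τ₁ + (E₂ * M).trace • τ₂) = γS
      rw [e1, e2]
      rw [trSnd_add, trSnd_smul, trSnd_smul, hτ₁def, hτ₂def, trSnd_kron, trSnd_kron,
        hψtr, hζtr, one_smul, one_smul, hrec1]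
      abel
    · show trFst ((E₁ * M).trace • τ₁ + (E₂ * M).trace • τ₂) = γC
      rw [e1, e2]
      rw [trFst_add, trFst_smul, trFst_smul, hτ₁def, hτ₂def, trFst_kron, trFst_kron,
        hσ.2, hωtr, one_smul, one_smul, hrec2]
      abel
  · -- the catalytic transformation
    have f1 : (E₁ * (ρS ⊗ₖ ψ)).trace = 1 := by
      rw [hE₁def, ← Matrix.mul_kronecker_mul, one_mul, hψψ, Matrix.trace_kronecker,
        hρ.2, hψtr, mul_one]
    have f2 : (E₂ * (ρS ⊗ₖ ψ)).trace = 0 := by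
      rw [hE₂def, ← Matrix.mul_kronecker_mul, one_mul, Matrix.sub_mul, one_mul, hψψ,
        sub_self, Matrix.kronecker_zero, Matrix.trace_zero]
    show ((E₁ * (ρS ⊗ₖ ψ)).trace) • τ₁ + ((E₂ * (ρS ⊗ₖ ψ)).trace) • τ₂ = σS ⊗ₖ ψ
    rw [f1, f2, one_smul, zero_smul, add_zero, hτ₁def]

end QIT
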